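/- Define Θ(m_1,...,m_r) = -2 + Σ_{i=1}^r (1 - 1/m_i) and α(m) = 2/Θ(m). Suppose 2 ≤ m_1 ≤ ... ≤ m_r are integers with Θ(m) > 0, α(m) a positive integer, and each m_i divides α(m). Then the tuple (m_1,...,m_r) belongs to the explicit finite list: (2,3,7), (2,3,8), (2,4,5), (2,3,9), (2,3,10), (2,3,12), (2,4,6), (3,3,4), (2,5,5), (2,3,18), (2,4,8), (3,3,5), (2,4,12), (2,6,6), (3,3,6), (3,4,4), (2,5,10), (3,3,9), (2,8,8), (4,4,4), (3,6,6), (5,5,5), (2,2,2,3), (2,2,2,4), (2,2,2,6), (2,2,3,3), (2,2,4,4), (3,3,3,3), (2,2,2,2,2), (2,2,2,2,2,2). -/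

import Mathlib

private lemma dle {a m n d e : ℕ} (hm : 1 ≤ m) (hmn : m ≤ n) (hd : a = m*d) (he : a = n*e) :
    e ≤ d := by
  have h1 : m*e ≤ n*e := Nat.mul_le_mul_right e hmn
  rw [← he, hd] at h1
  exact Nat.le_of_mul_le_mul_left h1 hm

private lemma sum_ge_half (L : List ℚ) (h : ∀ x ∈ L, 1/2 ≤ x) :
    (L.length : ℚ)/2 ≤ L.sum := by
  induction L with
  | nil => simp
  | cons x t ih =>
    simp only [List.length_cons, List.sum_cons]
    have h2 := ih (fun y hy => h y (List.mem_cons_of_mem _ hy))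
    have hx := h x (by simp)
    push_cast
    linarith

private def 𝒯 : List (List ℕ) :=
  [[2,3,7], [2,3,8], [2,4,5], [2,3,9], [2,3,10], [2,3,12],
   [2,4,6], [3,3,4], [2,5,5], [2,3,18], [2,4,8], [3,3,5],
   [2,4,12], [2,6,6], [3,3,6], [3,4,4], [2,5,10], [3,3,9],
   [2,8,8], [4,4,4], [3,6,6], [5,5,5], [2,2,2,3], [2,2,2,4],
   [2,2,2,6], [2,2,3,3], [2,2,4,4], [3,3,3,3], [2,2,2,2,2],
   [2,2,2,2,2,2]]

set_option maxHeartbeats 4000000 in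
private lemma mem3 (a m1 d1 m2 d2 m3 d3 : ℕ) (ha : 0 < a)
    (hm1 : 2 ≤ m1) (h12 : m1 ≤ m2) (h23 : m2 ≤ m3)
    (e1 : a = m1 * d1) (e2 : a = m2 * d2) (e3 : a = m3 * d3)
    (keyN : a = d1 + d2 + d3 + 2) :
    [m1, m2, m3] ∈ 𝒯 := by
  have hm2 : 2 ≤ m2 := le_trans hm1 h12
  have hd3 : 1 ≤ d3 := by
    rcases Nat.eq_zero_or_pos d3 with h|h
    · subst h; simp at e3; omega
    · exact h
  have hd32 : d3 ≤ d2 := dle (by omega) h23 e2 e3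
  have hd21 : d2 ≤ d1 := dle (by omega) h12 e1 e2
  have hp1 : 2*d1 ≤ a := by rw [e1]; exact Nat.mul_le_mul_right d1 hm1
  have hb1 : m1 ≤ 5 := by
    by_contra hc; push_neg at hc
    have h6 : 6*d1 ≤ a := by rw [e1]; exact Nat.mul_le_mul_right d1 hc
    omega
  have hb2 : m2 ≤ 8 := by
    by_contra hc; push_neg at hc
    have h9 : 9*d2 ≤ a := by rw [e2]; exact Nat.mul_le_mul_right d2 hc
    omega
  have hb3 : m3 ≤ 18 := by
    by_contra hc; push_neg at hc
    have h19 : 19*d3 ≤ a := by rw [e3]; exact Nat.mul_le_mul_right d3 (by omega)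
    rcases Nat.lt_or_ge m2 3 with h|h
    · have hm2' : m2 = 2 := by omega
      subst hm2'
      omega
    · have h3d2 : 3*d2 ≤ a := by rw [e2]; exact Nat.mul_le_mul_right d2 h
      omega
  interval_cases m1 <;> interval_cases m2 <;> interval_cases m3 <;>
    first
    | decide
    | (exfalso; omega)

set_option maxHeartbeats 4000000 in
private lemma mem4 (a m1 d1 m2 d2 m3 d3 m4 d4 : ℕ) (ha : 0 < a)
    (hm1 : 2 ≤ m1) (h12 : m1 ≤ m2) (h23 : m2 ≤ m3) (h34 : m3 ≤ m4)
    (e1 : a = m1 * d1) (e2 : a = m2 * d2) (e3 : a = m3 * d3) (e4 : a = m4 * d4)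
    (keyN : 2*a = d1 + d2 + d3 + d4 + 2) :
    [m1, m2, m3, m4] ∈ 𝒯 := by
  have hm2 : 2 ≤ m2 := le_trans hm1 h12
  have hm3 : 2 ≤ m3 := le_trans hm2 h23
  have hd4 : 1 ≤ d4 := by
    rcases Nat.eq_zero_or_pos d4 with h|h
    · subst h; simp at e4; omega
    · exact h
  have hd43 : d4 ≤ d3 := dle (by omega) h34 e3 e4
  have hd32 : d3 ≤ d2 := dle (by omega) h23 e2 e3
  have hd21 : d2 ≤ d1 := dle (by omega) h12 e1 e2
  have hp1 : 2*d1 ≤ a := by rw [e1]; exact Nat.mul_le_mul_right d1 hm1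
  have hp2 : 2*d2 ≤ a := by rw [e2]; exact Nat.mul_le_mul_right d2 hm2
  have hp3 : 2*d3 ≤ a := by rw [e3]; exact Nat.mul_le_mul_right d3 hm3
  have hb1 : m1 ≤ 3 := by
    by_contra hc; push_neg at hc
    have h4 : 4*d1 ≤ a := by rw [e1]; exact Nat.mul_le_mul_right d1 hc
    omega
  have hb2 : m2 ≤ 4 := by
    by_contra hc; push_neg at hc
    have h5 : 5*d2 ≤ a := by rw [e2]; exact Nat.mul_le_mul_right d2 hc
    omega
  have hb3 : m3 ≤ 4 := by
    by_contra hc; push_neg at hc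
    have h5 : 5*d3 ≤ a := by rw [e3]; exact Nat.mul_le_mul_right d3 hc
    omega
  have hb4 : m4 ≤ 6 := by
    by_contra hc; push_neg at hc
    have h7 : 7*d4 ≤ a := by rw [e4]; exact Nat.mul_le_mul_right d4 hc
    omega
  interval_cases m1 <;> interval_cases m2 <;> interval_cases m3 <;> interval_cases m4 <;>
    first
    | decide
    | (exfalso; omega)

set_option maxHeartbeats 1000000 in
private lemma mem5 (a m1 d1 m2 d2 m3 d3 m4 d4 m5 d5 : ℕ) (ha : 0 < a)
    (hm1 : 2 ≤ m1) (h12 : m1 ≤ m2) (h23 : m2 ≤ m3) (h34 : m3 ≤ m4) (h45 : m4 ≤ m5)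
    (e1 : a = m1 * d1) (e2 : a = m2 * d2) (e3 : a = m3 * d3) (e4 : a = m4 * d4)
    (e5 : a = m5 * d5)
    (keyN : 3*a = d1 + d2 + d3 + d4 + d5 + 2) :
    [m1, m2, m3, m4, m5] ∈ 𝒯 := by
  have hm2 : 2 ≤ m2 := le_trans hm1 h12
  have hm3 : 2 ≤ m3 := le_trans hm2 h23
  have hm4 : 2 ≤ m4 := le_trans hm3 h34
  have hd5 : 1 ≤ d5 := by
    rcases Nat.eq_zero_or_pos d5 with h|h
    · subst h; simp at e5; omega
    · exact h
  have hd54 : d5 ≤ d4 := dle (by omega) h45 e4 e5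
  have hd43 : d4 ≤ d3 := dle (by omega) h34 e3 e4
  have hd32 : d3 ≤ d2 := dle (by omega) h23 e2 e3
  have hd21 : d2 ≤ d1 := dle (by omega) h12 e1 e2
  have hp1 : 2*d1 ≤ a := by rw [e1]; exact Nat.mul_le_mul_right d1 hm1
  have hp2 : 2*d2 ≤ a := by rw [e2]; exact Nat.mul_le_mul_right d2 hm2
  have hp3 : 2*d3 ≤ a := by rw [e3]; exact Nat.mul_le_mul_right d3 hm3
  have hb4 : m4 ≤ 2 := by
    by_contra hc; push_neg at hc
    have h3 : 3*d4 ≤ a := by rw [e4]; exact Nat.mul_le_mul_right d4 hc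
    omega
  have hm1' : m1 = 2 := by omega
  have hm2' : m2 = 2 := by omega
  have hm3' : m3 = 2 := by omega
  have hm4' : m4 = 2 := by omega
  subst hm1' hm2' hm3' hm4'
  have hb5 : m5 ≤ 4 := by
    by_contra hc; push_neg at hc
    have h5 : 5*d5 ≤ a := by rw [e5]; exact Nat.mul_le_mul_right d5 hc
    omega
  interval_cases m5 <;>
    first
    | decide
    | (exfalso; omega)

set_option maxHeartbeats 1000000 in
private lemma mem6 (a m1 d1 m2 d2 m3 d3 m4 d4 m5 d5 m6 d6 : ℕ) (ha : 0 < a)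
    (hm1 : 2 ≤ m1) (h12 : m1 ≤ m2) (h23 : m2 ≤ m3) (h34 : m3 ≤ m4) (h45 : m4 ≤ m5)
    (h56 : m5 ≤ m6)
    (e1 : a = m1 * d1) (e2 : a = m2 * d2) (e3 : a = m3 * d3) (e4 : a = m4 * d4)
    (e5 : a = m5 * d5) (e6 : a = m6 * d6)
    (keyN : 4*a = d1 + d2 + d3 + d4 + d5 + d6 + 2) :
    [m1, m2, m3, m4, m5, m6] ∈ 𝒯 := by
  have hm2 : 2 ≤ m2 := le_trans hm1 h12
  have hm3 : 2 ≤ m3 := le_trans hm2 h23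
  have hm4 : 2 ≤ m4 := le_trans hm3 h34
  have hm5 : 2 ≤ m5 := le_trans hm4 h45
  have hd6 : 1 ≤ d6 := by
    rcases Nat.eq_zero_or_pos d6 with h|h
    · subst h; simp at e6; omega
    · exact h
  have hd65 : d6 ≤ d5 := dle (by omega) h56 e5 e6
  have hd54 : d5 ≤ d4 := dle (by omega) h45 e4 e5
  have hd43 : d4 ≤ d3 := dle (by omega) h34 e3 e4
  have hd32 : d3 ≤ d2 := dle (by omega) h23 e2 e3
  have hd21 : d2 ≤ d1 := dle (by omega) h12 e1 e2
  have hp1 : 2*d1 ≤ a := by rw [e1]; exact Nat.mul_le_mul_right d1 hm1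
  have hp2 : 2*d2 ≤ a := by rw [e2]; exact Nat.mul_le_mul_right d2 hm2
  have hp3 : 2*d3 ≤ a := by rw [e3]; exact Nat.mul_le_mul_right d3 hm3
  have hp4 : 2*d4 ≤ a := by rw [e4]; exact Nat.mul_le_mul_right d4 hm4
  have hp5 : 2*d5 ≤ a := by rw [e5]; exact Nat.mul_le_mul_right d5 hm5
  have hb6 : m6 ≤ 2 := by
    by_contra hc; push_neg at hc
    have h3 : 3*d6 ≤ a := by rw [e6]; exact Nat.mul_le_mul_right d6 hc
    omega
  have hm1' : m1 = 2 := by omega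
  have hm2' : m2 = 2 := by omega
  have hm3' : m3 = 2 := by omega
  have hm4' : m4 = 2 := by omega
  have hm5' : m5 = 2 := by omega
  have hm6' : m6 = 2 := by omega
  subst hm1' hm2' hm3' hm4' hm5' hm6'
  decide

/-- If `2 ≤ m₁ ≤ … ≤ m_r` are integers with `Θ(m) = -2 + Σ (1 - 1/mᵢ) > 0`,
`α(m) = 2/Θ(m)` a positive integer, and each `mᵢ` dividing `α(m)`, then the tuple
`(m₁,…,m_r)` belongs to the explicit list `𝒯`. -/
theorem admissible_tuples (l : List ℕ) (hsort : l.Pairwise (· ≤ ·))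
    (h2 : ∀ m ∈ l, 2 ≤ m)
    (hΘ : 0 < -2 + (l.map (fun m => 1 - 1 / (m : ℚ))).sum)
    (a : ℕ) (ha : 0 < a)
    (hα : (a : ℚ) * (-2 + (l.map (fun m => 1 - 1 / (m : ℚ))).sum) = 2)
    (hdvd : ∀ m ∈ l, m ∣ a) :
    l ∈ ([[2,3,7], [2,3,8], [2,4,5], [2,3,9], [2,3,10], [2,3,12],
          [2,4,6], [3,3,4], [2,5,5], [2,3,18], [2,4,8], [3,3,5],
          [2,4,12], [2,6,6], [3,3,6], [3,4,4], [2,5,10], [3,3,9],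
          [2,8,8], [4,4,4], [3,6,6], [5,5,5], [2,2,2,3], [2,2,2,4],
          [2,2,2,6], [2,2,3,3], [2,2,4,4], [3,3,3,3], [2,2,2,2,2],
          [2,2,2,2,2,2]] : List (List ℕ)) := by
  show l ∈ 𝒯
  have hne : l ≠ [] := by rintro rfl; norm_num at hΘ
  obtain ⟨m0, hm0⟩ := List.exists_mem_of_ne_nil l hne
  have ha2 : 2 ≤ a := le_trans (h2 m0 hm0) (Nat.le_of_dvd ha (hdvd m0 hm0))
  have hlen : l.length ≤ 6 := by
    by_contra hc
    push_neg at hc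
    have hmem : ∀ x ∈ (l.map (fun m => 1 - 1 / (m : ℚ))), 1/2 ≤ x := by
      intro x hx
      simp only [List.mem_map] at hx
      obtain ⟨q, hq, rfl⟩ := hx
      simp at hq
      obtain ⟨n, hn, rfl⟩ := hq
      have h2m : 2 ≤ n := h2 n hn
      have hh : (1:ℚ)/n ≤ 1/2 := one_div_le_one_div_of_le (by norm_num) (by exact_mod_cast h2m)
      rw [one_div] at hh
      simp only [one_div] at hh ⊢
      linarith
    have hs := sum_ge_half _ hmem
    have hlen' : ((l.map (fun m => 1 - 1 / (m : ℚ))).length : ℚ) = l.length := by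
      simp [Function.comp_def]
    have h7 : (7:ℚ) ≤ l.length := by exact_mod_cast hc
    have ha2' : (2:ℚ) ≤ a := by exact_mod_cast ha2
    rw [hlen'] at hs
    nlinarith [hα, hs, h7, ha2']
  rcases l with _|⟨m1, _|⟨m2, _|⟨m3, _|⟨m4, _|⟨m5, _|⟨m6, _|⟨m7, t⟩⟩⟩⟩⟩⟩⟩
  · simp at hΘ; exact absurd hΘ (by norm_num)
  · -- length 1 : Θ < 0
    exfalso
    simp at hΘ
    have h1 : (0:ℚ) ≤ ((m1:ℚ))⁻¹ := by positivity
    linarith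
  · -- length 2 : Θ < 0
    exfalso
    simp at hΘ
    have h1 : (0:ℚ) ≤ ((m1:ℚ))⁻¹ := by positivity
    have h2' : (0:ℚ) ≤ ((m2:ℚ))⁻¹ := by positivity
    linarith
  · -- length 3
    have hm1 : 2 ≤ m1 := h2 m1 (by simp)
    have hm2 : 2 ≤ m2 := h2 m2 (by simp)
    have hm3 : 2 ≤ m3 := h2 m3 (by simp)
    have hs1 := List.pairwise_cons.mp hsort
    have hs2 := List.pairwise_cons.mp hs1.2
    have h12 : m1 ≤ m2 := hs1.1 m2 (by simp)
    have h23 : m2 ≤ m3 := hs2.1 m3 (by simp)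
    obtain ⟨d1, e1⟩ := hdvd m1 (by simp)
    obtain ⟨d2, e2⟩ := hdvd m2 (by simp)
    obtain ⟨d3, e3⟩ := hdvd m3 (by simp)
    have hm1q : (m1:ℚ) ≠ 0 := Nat.cast_ne_zero.mpr (by omega)
    have hm2q : (m2:ℚ) ≠ 0 := Nat.cast_ne_zero.mpr (by omega)
    have hm3q : (m3:ℚ) ≠ 0 := Nat.cast_ne_zero.mpr (by omega)
    have t1 : (a:ℚ) * (1/(m1:ℚ)) = d1 := by
      have e1' : (a:ℚ) = (m1:ℚ) * d1 := by exact_mod_cast e1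
      rw [e1']; field_simp
    have t2 : (a:ℚ) * (1/(m2:ℚ)) = d2 := by
      have e2' : (a:ℚ) = (m2:ℚ) * d2 := by exact_mod_cast e2
      rw [e2']; field_simp
    have t3 : (a:ℚ) * (1/(m3:ℚ)) = d3 := by
      have e3' : (a:ℚ) = (m3:ℚ) * d3 := by exact_mod_cast e3
      rw [e3']; field_simp
    simp at hα
    have key : (a:ℚ) = d1 + d2 + d3 + 2 := by
      ring_nf at hα t1 t2 t3
      linarith
    have keyN : a = d1 + d2 + d3 + 2 := by exact_mod_cast key
    exact mem3 a m1 d1 m2 d2 m3 d3 ha hm1 h12 h23 e1 e2 e3 keyN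
  · -- length 4
    have hm1 : 2 ≤ m1 := h2 m1 (by simp)
    have hm2 : 2 ≤ m2 := h2 m2 (by simp)
    have hm3 : 2 ≤ m3 := h2 m3 (by simp)
    have hm4 : 2 ≤ m4 := h2 m4 (by simp)
    have hs1 := List.pairwise_cons.mp hsort
    have hs2 := List.pairwise_cons.mp hs1.2
    have hs3 := List.pairwise_cons.mp hs2.2
    have h12 : m1 ≤ m2 := hs1.1 m2 (by simp)
    have h23 : m2 ≤ m3 := hs2.1 m3 (by simp)
    have h34 : m3 ≤ m4 := hs3.1 m4 (by simp)
    obtain ⟨d1, e1⟩ := hdvd m1 (by simp)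
    obtain ⟨d2, e2⟩ := hdvd m2 (by simp)
    obtain ⟨d3, e3⟩ := hdvd m3 (by simp)
    obtain ⟨d4, e4⟩ := hdvd m4 (by simp)
    have hm1q : (m1:ℚ) ≠ 0 := Nat.cast_ne_zero.mpr (by omega)
    have hm2q : (m2:ℚ) ≠ 0 := Nat.cast_ne_zero.mpr (by omega)
    have hm3q : (m3:ℚ) ≠ 0 := Nat.cast_ne_zero.mpr (by omega)
    have hm4q : (m4:ℚ) ≠ 0 := Nat.cast_ne_zero.mpr (by omega)
    have t1 : (a:ℚ) * (1/(m1:ℚ)) = d1 := by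
      have e1' : (a:ℚ) = (m1:ℚ) * d1 := by exact_mod_cast e1
      rw [e1']; field_simp
    have t2 : (a:ℚ) * (1/(m2:ℚ)) = d2 := by
      have e2' : (a:ℚ) = (m2:ℚ) * d2 := by exact_mod_cast e2
      rw [e2']; field_simp
    have t3 : (a:ℚ) * (1/(m3:ℚ)) = d3 := by
      have e3' : (a:ℚ) = (m3:ℚ) * d3 := by exact_mod_cast e3
      rw [e3']; field_simp
    have t4 : (a:ℚ) * (1/(m4:ℚ)) = d4 := by
      have e4' : (a:ℚ) = (m4:ℚ) * d4 := by exact_mod_cast e4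
      rw [e4']; field_simp
    simp at hα
    have key : 2*(a:ℚ) = d1 + d2 + d3 + d4 + 2 := by
      ring_nf at hα t1 t2 t3 t4
      linarith
    have keyN : 2*a = d1 + d2 + d3 + d4 + 2 := by exact_mod_cast key
    exact mem4 a m1 d1 m2 d2 m3 d3 m4 d4 ha hm1 h12 h23 h34 e1 e2 e3 e4 keyN
  · -- length 5
    have hm1 : 2 ≤ m1 := h2 m1 (by simp)
    have hm2 : 2 ≤ m2 := h2 m2 (by simp)
    have hm3 : 2 ≤ m3 := h2 m3 (by simp)
    have hm4 : 2 ≤ m4 := h2 m4 (by simp)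
    have hm5 : 2 ≤ m5 := h2 m5 (by simp)
    have hs1 := List.pairwise_cons.mp hsort
    have hs2 := List.pairwise_cons.mp hs1.2
    have hs3 := List.pairwise_cons.mp hs2.2
    have hs4 := List.pairwise_cons.mp hs3.2
    have h12 : m1 ≤ m2 := hs1.1 m2 (by simp)
    have h23 : m2 ≤ m3 := hs2.1 m3 (by simp)
    have h34 : m3 ≤ m4 := hs3.1 m4 (by simp)
    have h45 : m4 ≤ m5 := hs4.1 m5 (by simp)
    obtain ⟨d1, e1⟩ := hdvd m1 (by simp)
    obtain ⟨d2, e2⟩ := hdvd m2 (by simp)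
    obtain ⟨d3, e3⟩ := hdvd m3 (by simp)
    obtain ⟨d4, e4⟩ := hdvd m4 (by simp)
    obtain ⟨d5, e5⟩ := hdvd m5 (by simp)
    have hm1q : (m1:ℚ) ≠ 0 := Nat.cast_ne_zero.mpr (by omega)
    have hm2q : (m2:ℚ) ≠ 0 := Nat.cast_ne_zero.mpr (by omega)
    have hm3q : (m3:ℚ) ≠ 0 := Nat.cast_ne_zero.mpr (by omega)
    have hm4q : (m4:ℚ) ≠ 0 := Nat.cast_ne_zero.mpr (by omega)
    have hm5q : (m5:ℚ) ≠ 0 := Nat.cast_ne_zero.mpr (by omega)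
    have t1 : (a:ℚ) * (1/(m1:ℚ)) = d1 := by
      have e1' : (a:ℚ) = (m1:ℚ) * d1 := by exact_mod_cast e1
      rw [e1']; field_simp
    have t2 : (a:ℚ) * (1/(m2:ℚ)) = d2 := by
      have e2' : (a:ℚ) = (m2:ℚ) * d2 := by exact_mod_cast e2
      rw [e2']; field_simp
    have t3 : (a:ℚ) * (1/(m3:ℚ)) = d3 := by
      have e3' : (a:ℚ) = (m3:ℚ) * d3 := by exact_mod_cast e3
      rw [e3']; field_simp
    have t4 : (a:ℚ) * (1/(m4:ℚ)) = d4 := by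
      have e4' : (a:ℚ) = (m4:ℚ) * d4 := by exact_mod_cast e4
      rw [e4']; field_simp
    have t5 : (a:ℚ) * (1/(m5:ℚ)) = d5 := by
      have e5' : (a:ℚ) = (m5:ℚ) * d5 := by exact_mod_cast e5
      rw [e5']; field_simp
    simp at hα
    have key : 3*(a:ℚ) = d1 + d2 + d3 + d4 + d5 + 2 := by
      ring_nf at hα t1 t2 t3 t4 t5
      linarith
    have keyN : 3*a = d1 + d2 + d3 + d4 + d5 + 2 := by exact_mod_cast key
    exact mem5 a m1 d1 m2 d2 m3 d3 m4 d4 m5 d5 ha hm1 h12 h23 h34 h45 e1 e2 e3 e4 e5 keyN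
  · -- length 6
    have hm1 : 2 ≤ m1 := h2 m1 (by simp)
    have hm2 : 2 ≤ m2 := h2 m2 (by simp)
    have hm3 : 2 ≤ m3 := h2 m3 (by simp)
    have hm4 : 2 ≤ m4 := h2 m4 (by simp)
    have hm5 : 2 ≤ m5 := h2 m5 (by simp)
    have hm6 : 2 ≤ m6 := h2 m6 (by simp)
    have hs1 := List.pairwise_cons.mp hsort
    have hs2 := List.pairwise_cons.mp hs1.2
    have hs3 := List.pairwise_cons.mp hs2.2
    have hs4 := List.pairwise_cons.mp hs3.2
    have hs5 := List.pairwise_cons.mp hs4.2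
    have h12 : m1 ≤ m2 := hs1.1 m2 (by simp)
    have h23 : m2 ≤ m3 := hs2.1 m3 (by simp)
    have h34 : m3 ≤ m4 := hs3.1 m4 (by simp)
    have h45 : m4 ≤ m5 := hs4.1 m5 (by simp)
    have h56 : m5 ≤ m6 := hs5.1 m6 (by simp)
    obtain ⟨d1, e1⟩ := hdvd m1 (by simp)
    obtain ⟨d2, e2⟩ := hdvd m2 (by simp)
    obtain ⟨d3, e3⟩ := hdvd m3 (by simp)
    obtain ⟨d4, e4⟩ := hdvd m4 (by simp)
    obtain ⟨d5, e5⟩ := hdvd m5 (by simp)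
    obtain ⟨d6, e6⟩ := hdvd m6 (by simp)
    have hm1q : (m1:ℚ) ≠ 0 := Nat.cast_ne_zero.mpr (by omega)
    have hm2q : (m2:ℚ) ≠ 0 := Nat.cast_ne_zero.mpr (by omega)
    have hm3q : (m3:ℚ) ≠ 0 := Nat.cast_ne_zero.mpr (by omega)
    have hm4q : (m4:ℚ) ≠ 0 := Nat.cast_ne_zero.mpr (by omega)
    have hm5q : (m5:ℚ) ≠ 0 := Nat.cast_ne_zero.mpr (by omega)
    have hm6q : (m6:ℚ) ≠ 0 := Nat.cast_ne_zero.mpr (by omega)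
    have t1 : (a:ℚ) * (1/(m1:ℚ)) = d1 := by
      have e1' : (a:ℚ) = (m1:ℚ) * d1 := by exact_mod_cast e1
      rw [e1']; field_simp
    have t2 : (a:ℚ) * (1/(m2:ℚ)) = d2 := by
      have e2' : (a:ℚ) = (m2:ℚ) * d2 := by exact_mod_cast e2
      rw [e2']; field_simp
    have t3 : (a:ℚ) * (1/(m3:ℚ)) = d3 := by
      have e3' : (a:ℚ) = (m3:ℚ) * d3 := by exact_mod_cast e3
      rw [e3']; field_simp
    have t4 : (a:ℚ) * (1/(m4:ℚ)) = d4 := by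
      have e4' : (a:ℚ) = (m4:ℚ) * d4 := by exact_mod_cast e4
      rw [e4']; field_simp
    have t5 : (a:ℚ) * (1/(m5:ℚ)) = d5 := by
      have e5' : (a:ℚ) = (m5:ℚ) * d5 := by exact_mod_cast e5
      rw [e5']; field_simp
    have t6 : (a:ℚ) * (1/(m6:ℚ)) = d6 := by
      have e6' : (a:ℚ) = (m6:ℚ) * d6 := by exact_mod_cast e6
      rw [e6']; field_simp
    simp at hα
    have key : 4*(a:ℚ) = d1 + d2 + d3 + d4 + d5 + d6 + 2 := by
      ring_nf at hα t1 t2 t3 t4 t5 t6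
      linarith
    have keyN : 4*a = d1 + d2 + d3 + d4 + d5 + d6 + 2 := by exact_mod_cast key
    exact mem6 a m1 d1 m2 d2 m3 d3 m4 d4 m5 d5 m6 d6 ha hm1 h12 h23 h34 h45 h56
      e1 e2 e3 e4 e5 e6 keyN
  · -- length ≥ 7 : impossible
    exfalso
    simp only [List.length_cons] at hlen
    omega
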